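/- Let n be a positive integer, ξ a complex non-real algebraic number of degree greater than n, and suppose t_n(ξ) := max over μ ∈ ℂ* of dim_ℚ V_n(μ,ξ) satisfies t_n(ξ) > (n+1)/2. Then n is even and t_n(ξ) = (n+2)/2. -/
import Mathlib


open Polynomial

/-- The ℚ-vector space of polynomials `f ∈ ℚ[X]` of degree at most `n`
with `μ * f(ξ) ∈ ℝ`. -/
noncomputable def Vspace (n : ℕ) (μ ξ : ℂ) : Submodule ℚ ℚ[X] where
  carrier := {f | f.natDegree ≤ n ∧ ∃ r : ℝ, μ * aeval ξ f = (r : ℂ)}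
  zero_mem' := ⟨by simp, 0, by simp⟩
  add_mem' := by
    rintro f g ⟨hf, r, hr⟩ ⟨hg, s, hs⟩
    refine ⟨(natDegree_add_le f g).trans (by simp [hf, hg]), r + s, ?_⟩
    push_cast
    rw [map_add, mul_add, hr, hs]
  smul_mem' := by
    rintro c f ⟨hf, r, hr⟩
    refine ⟨(natDegree_smul_le c f).trans hf, c * r, ?_⟩
    rw [map_smul, Algebra.mul_smul_comm, hr, Rat.smul_def]
    push_cast
    ring

/-- `t_n(ξ)`: the maximum over nonzero `μ ∈ ℂ` of `dim_ℚ V_n(μ,ξ)`. -/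
noncomputable def tdeg (n : ℕ) (ξ : ℂ) : ℕ :=
  sSup {d : ℕ | ∃ μ : ℂ, μ ≠ 0 ∧ d = Module.finrank ℚ (Vspace n μ ξ)}

lemma vspace_le_degreeLT (n : ℕ) (μ ξ : ℂ) : Vspace n μ ξ ≤ degreeLT ℚ (n + 1) := by
  intro f hf
  rw [Polynomial.mem_degreeLT]
  calc f.degree ≤ (n : WithBot ℕ) := Polynomial.natDegree_le_iff_degree_le.mp hf.1
  _ < ((n+1 : ℕ) : WithBot ℕ) := by exact_mod_cast Nat.lt_succ_self n

instance (n : ℕ) : FiniteDimensional ℚ (degreeLT ℚ n : Submodule ℚ ℚ[X]) :=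
  Module.Finite.equiv (Polynomial.degreeLTEquiv ℚ n).symm

instance (n : ℕ) (μ ξ : ℂ) : FiniteDimensional ℚ (Vspace n μ ξ) :=
  Submodule.finiteDimensional_of_le (vspace_le_degreeLT n μ ξ)

/-- Key bound: for any nonzero `μ`, `2 · dim V_n(μ,ξ) ≤ n + 2` (here `n = m+1`).
Proof: `V_n(μ,ξ)` and `X · V_{n-1}(μ,ξ)` intersect trivially (otherwise `ξ` would be
a ratio of two real numbers) and both sit inside polynomials of degree `< n+1`,
so `dim V_n + dim V_{n-1} ≤ n+1`; moreover `dim V_n ≤ dim V_{n-1} + 1`. -/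
lemma two_mul_finrank_Vspace_le (m : ℕ) (ξ : ℂ) (hξreal : ξ.im ≠ 0)
    (hdeg : m + 1 < (minpoly ℚ ξ).natDegree) (μ : ℂ) (hμ : μ ≠ 0) :
    2 * Module.finrank ℚ (Vspace (m+1) μ ξ) ≤ m + 3 := by
  classical
  set A := Vspace (m+1) μ ξ with hA
  set B := Vspace m μ ξ with hB
  -- step a : finrank A ≤ finrank B + 1
  have stepa : Module.finrank ℚ A ≤ Module.finrank ℚ B + 1 := by
    set φ : A →ₗ[ℚ] ℚ := (Polynomial.lcoeff ℚ (m+1)).comp A.subtype with hφ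
    have h1 : Module.finrank ℚ (LinearMap.range φ) + Module.finrank ℚ (LinearMap.ker φ)
        = Module.finrank ℚ A := LinearMap.finrank_range_add_finrank_ker φ
    have h2 : Module.finrank ℚ (LinearMap.range φ) ≤ 1 := by
      simpa using (LinearMap.range φ).finrank_le
    have h3 : Module.finrank ℚ (LinearMap.ker φ) ≤ Module.finrank ℚ B := by
      rw [← Submodule.finrank_map_subtype_eq]
      refine Submodule.finrank_mono ?_
      rintro f ⟨⟨g, hg⟩, hker, rfl⟩
      have hc : (g : ℚ[X]).coeff (m+1) = 0 := by
        simpa [φ] using hker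
      refine ⟨?_, hg.2⟩
      -- natDegree ≤ m
      by_contra hlt
      push_neg at hlt
      have : (g : ℚ[X]).natDegree = m + 1 := le_antisymm hg.1 hlt
      have hg0 : (g : ℚ[X]) ≠ 0 := by
        intro h0
        rw [h0] at this
        simp at this
      exact hg0 (Polynomial.leadingCoeff_eq_zero.mp (by rwa [Polynomial.leadingCoeff, this]))
    omega
  -- the multiplication-by-X map
  set ψ : ℚ[X] →ₗ[ℚ] ℚ[X] := LinearMap.mulLeft ℚ (X : ℚ[X]) with hψ
  have hψinj : Function.Injective ψ := by
    intro a b hab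
    simpa [ψ, LinearMap.mulLeft_apply] using
      mul_left_cancel₀ (Polynomial.X_ne_zero (R := ℚ)) (by simpa [ψ] using hab)
  set C := Submodule.map ψ B with hC
  have hBC : Module.finrank ℚ C = Module.finrank ℚ B :=
    (LinearEquiv.finrank_eq (Submodule.equivMapOfInjective ψ hψinj B)).symm
  haveI : FiniteDimensional ℚ C := by
    rw [hC]
    exact Module.Finite.map B ψ
  -- disjointness
  have hdisj : A ⊓ C = ⊥ := by
    rw [Submodule.eq_bot_iff]
    rintro f ⟨hfA, hfC⟩
    obtain ⟨h, hhB, rfl⟩ := hfC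
    obtain ⟨-, r, hr⟩ := hfA
    obtain ⟨hhdeg, s, hs⟩ := hhB
    have hψh : ψ h = X * h := rfl
    rw [hψh] at hr ⊢
    have hev : μ * aeval ξ (X * h) = ξ * (μ * aeval ξ h) := by
      rw [map_mul]; simp [aeval_X]; ring
    rw [hev, hs] at hr
    -- hr : ξ * s = r
    by_cases hs0 : (s : ℂ) = 0
    · -- h(ξ) = 0, so h = 0 since deg h < deg(minpoly)
      have : aeval ξ h = 0 := by
        have := hs
        rw [hs0] at this
        exact (mul_eq_zero.mp this).resolve_left hμ
      have hh0 : h = 0 := by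
        by_contra hh0
        have hdvd : minpoly ℚ ξ ∣ h := minpoly.dvd ℚ ξ this
        have := Polynomial.natDegree_le_of_dvd hdvd hh0
        omega
      rw [hh0, mul_zero]
    · -- otherwise ξ = r/s would be real, contradiction
      exfalso
      have hξ : ξ = (r : ℂ) / (s : ℂ) := by
        field_simp at hr ⊢
        linear_combination hr
      apply hξreal
      rw [hξ, ← Complex.ofReal_div]
      simp
  -- A ⊔ C sits inside degreeLT (m+2)
  have hsum : Module.finrank ℚ A + Module.finrank ℚ B ≤ m + 2 := by
    have hle : A ⊔ C ≤ degreeLT ℚ (m + 2) := by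
      rw [sup_le_iff]
      constructor
      · exact vspace_le_degreeLT (m+1) μ ξ
      · rintro f ⟨h, hhB, rfl⟩
        rw [Polynomial.mem_degreeLT]
        have : (ψ h).natDegree ≤ m + 1 := by
          simp only [hψ, LinearMap.mulLeft_apply]
          calc (X * h).natDegree ≤ X.natDegree + h.natDegree := Polynomial.natDegree_mul_le
          _ ≤ 1 + m := by
              have := hhB.1
              simp [Polynomial.natDegree_X]
              omega
          _ = m + 1 := by omega
        calc (ψ h).degree ≤ ((m+1 : ℕ) : WithBot ℕ) := Polynomial.natDegree_le_iff_degree_le.mp this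
        _ < ((m+2 : ℕ) : WithBot ℕ) := by exact_mod_cast Nat.lt_succ_self (m+1)
    have h4 : Module.finrank ℚ (A ⊔ C : Submodule ℚ ℚ[X]) ≤ m + 2 := by
      calc Module.finrank ℚ (A ⊔ C : Submodule ℚ ℚ[X])
          ≤ Module.finrank ℚ (degreeLT ℚ (m+2) : Submodule ℚ ℚ[X]) :=
            Submodule.finrank_mono hle
      _ = m + 2 := by
          rw [LinearEquiv.finrank_eq (Polynomial.degreeLTEquiv ℚ (m+2))]
          simp [Module.finrank_fin_fun]
    have h5 := Submodule.finrank_sup_add_finrank_inf_eq A C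
    rw [hdisj] at h5
    simp only [finrank_bot, add_zero] at h5
    omega
  omega

theorem even_and_tdeg_eq_of_large_tdeg (n : ℕ) (hn : 0 < n) (ξ : ℂ)
    (hξreal : ξ.im ≠ 0) (hξalg : IsAlgebraic ℚ ξ)
    (hdeg : n < (minpoly ℚ ξ).natDegree)
    (ht : n + 1 < 2 * tdeg n ξ) :
    Even n ∧ 2 * tdeg n ξ = n + 2 := by
  obtain ⟨m, rfl⟩ : ∃ m, n = m + 1 := ⟨n - 1, by omega⟩
  have hbd : 2 * tdeg (m+1) ξ ≤ m + 3 := by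
    have hub : ∀ d ∈ {d : ℕ | ∃ μ : ℂ, μ ≠ 0 ∧ d = Module.finrank ℚ (Vspace (m+1) μ ξ)},
        d ≤ (m + 3) / 2 := by
      rintro d ⟨μ, hμ, rfl⟩
      have := two_mul_finrank_Vspace_le m ξ hξreal hdeg μ hμ
      omega
    have hne : {d : ℕ | ∃ μ : ℂ, μ ≠ 0 ∧ d = Module.finrank ℚ (Vspace (m+1) μ ξ)}.Nonempty :=
      ⟨_, 1, one_ne_zero, rfl⟩
    have h2 : tdeg (m+1) ξ ≤ (m+3)/2 := csSup_le hne hub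
    omega
  refine ⟨⟨tdeg (m+1) ξ - 1, by omega⟩, by omega⟩
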